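/- (Introduce) Let 𝔄 and 𝔅 be compatible τ-structures with B = A ⊎ {b} (disjoint union, b ∉ A). Let X ⊆ A and φ ∈ MSO(τ), and let 𝒢 = EMC(𝔄, X, φ) and 𝒢' = EMC(𝔅, X ∪ {b}, φ). Then: (1) if eval(𝒢) = ⊤ then eval(𝒢') = ⊤; (2) if eval(𝒢) = ⊥ then eval(𝒢') = ⊥. -/

import Mathlib

namespace MSOG

attribute [local instance] Classical.propDecidable

/-! ### Players and vocabularies -/

inductive Player where
  | falsifier
  | verifier
deriving DecidableEq

/-- A vocabulary: a finite set of relation symbol names and nullary symbol names.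
Symbols are drawn from `ℕ`; the arity of relation symbols is given by a global
arity function `ar : ℕ → ℕ`. -/
structure Vocab where
  rels : Finset ℕ
  nulls : Finset ℕ

def Vocab.addRel (τ : Vocab) (R : ℕ) : Vocab := ⟨insert R τ.rels, τ.nulls⟩

def Vocab.addNul (τ : Vocab) (c : ℕ) : Vocab := ⟨τ.rels, insert c τ.nulls⟩

/-! ### Structures -/

/-- A (partially interpreted) structure: a finite universe of objects (⊆ ℕ),
an interpretation of each relation symbol as a set of tuples (lists), and a
partial interpretation of nullary symbols (`none` = nil/uninterpreted). -/
structure Struc where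
  voc : Vocab
  univ : Finset ℕ
  rel : ℕ → List ℕ → Prop
  nul : ℕ → Option ℕ

/-- Wellformedness of a structure w.r.t. the arity function: relations only
interpret relation symbols of the vocabulary by tuples of the right length over
the universe, and nullary symbols of the vocabulary by universe elements. -/
structure Struc.WF (ar : ℕ → ℕ) (A : Struc) : Prop where
  rel_wf : ∀ R t, A.rel R t → R ∈ A.voc.rels ∧ t.length = ar R ∧ ∀ x ∈ t, x ∈ A.univ
  nul_wf : ∀ c x, A.nul c = some x → c ∈ A.voc.nulls ∧ x ∈ A.univ

def Struc.FullyInterpreted (A : Struc) : Prop := ∀ c ∈ A.voc.nulls, (A.nul c).isSome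

/-- The set `c̄^𝔄` of values of the interpreted nullary symbols. -/
def Struc.nulValues (A : Struc) : Finset ℕ :=
  A.voc.nulls.biUnion fun c => (A.nul c).toFinset

/-- Induced substructure `𝔄[s]`. -/
def Struc.restrict (A : Struc) (s : Finset ℕ) : Struc where
  voc := A.voc
  univ := A.univ ∩ s
  rel := fun R t => A.rel R t ∧ ∀ x ∈ t, x ∈ s
  nul := fun c =>
    match A.nul c with
    | some x => if x ∈ s then some x else none
    | none => none

/-- Expansion `(𝔄, u)` interpreting the nullary symbol `c` as `u` (possibly nil). -/
def Struc.addNul (A : Struc) (c : ℕ) (u : Option ℕ) : Struc where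
  voc := A.voc.addNul c
  univ := A.univ
  rel := A.rel
  nul := fun d => if d = c then u else A.nul d

/-- Expansion `(𝔄, U)` interpreting the unary relation symbol `R` as `U ⊆ A`. -/
def Struc.addRel (A : Struc) (R : ℕ) (U : Finset ℕ) : Struc where
  voc := A.voc.addRel R
  univ := A.univ
  rel := fun S t => if S = R then ∃ x ∈ U, t = [x] else A.rel S t
  nul := A.nul

/-- Expansion `(𝔄, U₁, …, U_l)` interpreting each unary relation symbol `R ∈ Rs`
as `U R ⊆ A`. -/
def Struc.addRels (A : Struc) (Rs : Finset ℕ) (U : ℕ → Finset ℕ) : Struc where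
  voc := ⟨A.voc.rels ∪ Rs, A.voc.nulls⟩
  univ := A.univ
  rel := fun S t => if S ∈ Rs then ∃ x ∈ U S, t = [x] else A.rel S t
  nul := A.nul

/-- `h` is an isomorphism from `A` to `B`. -/
structure Iso (A B : Struc) (h : ℕ → ℕ) : Prop where
  voc_eq : A.voc = B.voc
  bij : Set.BijOn h ↑A.univ ↑B.univ
  interp_iff : ∀ c ∈ A.voc.nulls, ((A.nul c).isSome ↔ (B.nul c).isSome)
  nul_map : ∀ c ∈ A.voc.nulls, ∀ x, A.nul c = some x → B.nul c = some (h x)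
  rel_map : ∀ R ∈ A.voc.rels, ∀ t : List ℕ, (∀ x ∈ t, x ∈ A.univ) →
    (A.rel R t ↔ B.rel R (t.map h))

/-- Two structures are compatible: interpreted nullary symbols agree, and the
identity is an isomorphism between the substructures induced by the common part
of the universes. -/
def Compatible (A B : Struc) : Prop :=
  A.voc = B.voc ∧
  (∀ c x y, A.nul c = some x → B.nul c = some y → x = y) ∧
  Iso (A.restrict (A.univ ∩ B.univ)) (B.restrict (A.univ ∩ B.univ)) id

/-- Union of two (compatible) structures. -/
def Struc.union (A B : Struc) : Struc where
  voc := A.voc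
  univ := A.univ ∪ B.univ
  rel := fun R t => A.rel R t ∨ B.rel R t
  nul := fun c =>
    match A.nul c with
    | some x => some x
    | none => B.nul c

/-! ### MSO formulas -/

/-- MSO formulas in negation normal form. -/
inductive MSO where
  | atom (R : ℕ) (cs : List ℕ)
  | natom (R : ℕ) (cs : List ℕ)
  | conj (φ ψ : MSO)
  | disj (φ ψ : MSO)
  | fall (c : ℕ) (φ : MSO)
  | fex (c : ℕ) (φ : MSO)
  | sall (R : ℕ) (φ : MSO)
  | sex (R : ℕ) (φ : MSO)
deriving DecidableEq

/-- `MSO.wf ar τ φ` means `φ ∈ MSO(τ)` (w.r.t. the arity function `ar`,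
quantified symbols being fresh unary relation resp. nullary symbols). -/
def MSO.wf (ar : ℕ → ℕ) : Vocab → MSO → Prop
  | τ, .atom R cs => R ∈ τ.rels ∧ cs.length = ar R ∧ ∀ c ∈ cs, c ∈ τ.nulls
  | τ, .natom R cs => R ∈ τ.rels ∧ cs.length = ar R ∧ ∀ c ∈ cs, c ∈ τ.nulls
  | τ, .conj φ ψ => MSO.wf ar τ φ ∧ MSO.wf ar τ ψ
  | τ, .disj φ ψ => MSO.wf ar τ φ ∧ MSO.wf ar τ ψ
  | τ, .fall c φ => c ∉ τ.nulls ∧ MSO.wf ar (τ.addNul c) φ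
  | τ, .fex c φ => c ∉ τ.nulls ∧ MSO.wf ar (τ.addNul c) φ
  | τ, .sall R φ => R ∉ τ.rels ∧ ar R = 1 ∧ MSO.wf ar (τ.addRel R) φ
  | τ, .sex R φ => R ∉ τ.rels ∧ ar R = 1 ∧ MSO.wf ar (τ.addRel R) φ

/-- Quantifier rank. -/
def MSO.qr : MSO → ℕ
  | .atom _ _ => 0
  | .natom _ _ => 0
  | .conj φ ψ => max φ.qr ψ.qr
  | .disj φ ψ => max φ.qr ψ.qr
  | .fall _ φ => φ.qr + 1
  | .fex _ φ => φ.qr + 1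
  | .sall _ φ => φ.qr + 1
  | .sex _ φ => φ.qr + 1

/-- Length `‖φ‖` of (an encoding of) the formula. -/
def MSO.len : MSO → ℕ
  | .atom _ cs => 1 + cs.length
  | .natom _ cs => 1 + cs.length
  | .conj φ ψ => 1 + φ.len + ψ.len
  | .disj φ ψ => 1 + φ.len + ψ.len
  | .fall _ φ => 1 + φ.len
  | .fex _ φ => 1 + φ.len
  | .sall _ φ => 1 + φ.len
  | .sex _ φ => 1 + φ.len

def MSO.IsAtomic : MSO → Prop
  | .atom _ _ | .natom _ _ => True
  | _ => False

def MSO.IsUniversal : MSO → Prop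
  | .conj _ _ | .fall _ _ | .sall _ _ => True
  | _ => False

def MSO.IsExistential : MSO → Prop
  | .disj _ _ | .fex _ _ | .sex _ _ => True
  | _ => False

/-- Classical (Tarskian) satisfaction `𝔄 ⊨ φ`. -/
def Sat : Struc → MSO → Prop
  | A, .atom R cs => ∃ t, cs.mapM A.nul = some t ∧ A.rel R t
  | A, .natom R cs => ∃ t, cs.mapM A.nul = some t ∧ ¬ A.rel R t
  | A, .conj φ ψ => Sat A φ ∧ Sat A ψ
  | A, .disj φ ψ => Sat A φ ∨ Sat A ψ
  | A, .fall c φ => ∀ a ∈ A.univ, Sat (A.addNul c (some a)) φ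
  | A, .fex c φ => ∃ a ∈ A.univ, Sat (A.addNul c (some a)) φ
  | A, .sall R φ => ∀ U ⊆ A.univ, Sat (A.addRel R U) φ
  | A, .sex R φ => ∃ U ⊆ A.univ, Sat (A.addRel R U) φ

/-! ### Games -/

/-- A game, presented as its unfolding: either one of the two fixed games
`⊤` (the verifier has a winning strategy) or `⊥` (the falsifier has a winning
strategy), or an initial position together with the player (if any) this
position is assigned to and the list of subgames reachable by the moves. -/
inductive Game (P : Type) where
  | top
  | bot
  | node (pos : P) (owner : Option Player) (subs : List (Game P))

theorem Game.sizeOf_lt_node {P : Type} [SizeOf P] {p : P} {o : Option Player}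
    {s : List (Game P)} {g : Game P} (h : g ∈ s) :
    sizeOf g < sizeOf (Game.node p o s) := by
  have := List.sizeOf_lt_of_mem h
  simp only [Game.node.sizeOf_spec]
  omega

/-- The evaluation algorithm: returns `⊤` if the verifier has a winning
strategy, `⊥` if the falsifier has one, and otherwise the unfolded game
recording the drawn plays. -/
noncomputable def Game.eval {P : Type} : Game P → Game P
  | .top => .top
  | .bot => .bot
  | .node p o subs =>
    let es := subs.attach.map fun g => Game.eval g.1
    match o with
    | some .falsifier =>
      if ∀ g ∈ es, g = Game.top then Game.top
      else if Game.bot ∈ es then Game.bot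
      else Game.node p o es
    | some .verifier =>
      if ∀ g ∈ es, g = Game.bot then Game.bot
      else if Game.top ∈ es then Game.top
      else Game.node p o es
    | none => Game.node p o es
termination_by g => sizeOf g
decreasing_by
  exact Game.sizeOf_lt_node g.2

/-- Equivalence of games, relative to an equivalence `pe` on positions:
the initial positions are equivalent (with equal assignment to players) and
there is a bijection `e` between the sets of subgames such that each subgame is
equivalent to its image. -/
def GEquiv {P : Type} (pe : P → P → Prop) : Game P → Game P → Prop
  | .top, .top => True
  | .bot, .bot => True
  | .node p o s, .node q o' t =>
    pe p q ∧ o = o' ∧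
    ∃ e : {g // g ∈ s} ≃ {g // g ∈ t}, ∀ g : {g // g ∈ s}, GEquiv pe g.1 (e g).1
  | _, _ => False
termination_by g _ => sizeOf g
decreasing_by
  exact Game.sizeOf_lt_node g.2

/-- Number of positions of a game. -/
def Game.size {P : Type} : Game P → ℕ
  | .top => 1
  | .bot => 1
  | .node _ _ subs => 1 + (subs.attach.map fun g => Game.size g.1).sum
termination_by g => sizeOf g
decreasing_by
  exact Game.sizeOf_lt_node g.2

/-! ### Model checking games -/

/-- Positions of extended model checking games: a structure, the current set
`X`, and a formula. -/
abbrev EPos : Type := Struc × Finset ℕ × MSO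

/-- Positions of classical model checking games. -/
abbrev CPos : Type := Struc × MSO

/-- Equivalence of positions: same `X ⊆ H₁ ∩ H₂`, same formula, and an
isomorphism between the structures fixing `X` pointwise. -/
def PosEquivE (p q : EPos) : Prop :=
  p.2.1 = q.2.1 ∧ p.2.2 = q.2.2 ∧
  p.2.1 ⊆ p.1.univ ∧ p.2.1 ⊆ q.1.univ ∧
  ∃ h : ℕ → ℕ, Iso p.1 q.1 h ∧ ∀ a ∈ p.2.1, h a = a

/-- Equivalence `≅` of extended model checking games. -/
def GEquivE : Game EPos → Game EPos → Prop := GEquiv PosEquivE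

/-- The extended model checking game `EMC(𝔄, X, φ)` (argument order:
formula, structure, set). -/
noncomputable def EMC : MSO → Struc → Finset ℕ → Game EPos
  | .atom R cs, A, X =>
    Game.node (A.restrict (X ∪ A.nulValues), X, .atom R cs)
      (if ∀ c ∈ cs, (A.nul c).isSome then
        (if Sat A (.atom R cs) then some .falsifier else some .verifier)
       else none) []
  | .natom R cs, A, X =>
    Game.node (A.restrict (X ∪ A.nulValues), X, .natom R cs)
      (if ∀ c ∈ cs, (A.nul c).isSome then
        (if Sat A (.natom R cs) then some .falsifier else some .verifier)
       else none) []
  | .conj φ ψ, A, X =>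
    Game.node (A.restrict (X ∪ A.nulValues), X, .conj φ ψ) (some .falsifier)
      [EMC φ A X, EMC ψ A X]
  | .disj φ ψ, A, X =>
    Game.node (A.restrict (X ∪ A.nulValues), X, .disj φ ψ) (some .verifier)
      [EMC φ A X, EMC ψ A X]
  | .fall c φ, A, X =>
    Game.node (A.restrict (X ∪ A.nulValues), X, .fall c φ) (some .falsifier)
      ((none :: A.univ.toList.map some).map fun u => EMC φ (A.addNul c u) X)
  | .fex c φ, A, X =>
    Game.node (A.restrict (X ∪ A.nulValues), X, .fex c φ) (some .verifier)
      ((none :: A.univ.toList.map some).map fun u => EMC φ (A.addNul c u) X)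
  | .sall R φ, A, X =>
    Game.node (A.restrict (X ∪ A.nulValues), X, .sall R φ) (some .falsifier)
      (A.univ.powerset.toList.map fun U => EMC φ (A.addRel R U) X)
  | .sex R φ, A, X =>
    Game.node (A.restrict (X ∪ A.nulValues), X, .sex R φ) (some .verifier)
      (A.univ.powerset.toList.map fun U => EMC φ (A.addRel R U) X)

/-- The classical model checking game `MC(𝔄, φ)` (argument order:
formula, structure); object quantifiers move only to elements of the universe
(no nil moves). -/
noncomputable def MC : MSO → Struc → Game CPos
  | .atom R cs, A =>
    Game.node (A.restrict A.nulValues, .atom R cs)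
      (if Sat A (.atom R cs) then some .falsifier else some .verifier) []
  | .natom R cs, A =>
    Game.node (A.restrict A.nulValues, .natom R cs)
      (if Sat A (.natom R cs) then some .falsifier else some .verifier) []
  | .conj φ ψ, A =>
    Game.node (A.restrict A.nulValues, .conj φ ψ) (some .falsifier)
      [MC φ A, MC ψ A]
  | .disj φ ψ, A =>
    Game.node (A.restrict A.nulValues, .disj φ ψ) (some .verifier)
      [MC φ A, MC ψ A]
  | .fall c φ, A =>
    Game.node (A.restrict A.nulValues, .fall c φ) (some .falsifier)
      (A.univ.toList.map fun a => MC φ (A.addNul c (some a)))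
  | .fex c φ, A =>
    Game.node (A.restrict A.nulValues, .fex c φ) (some .verifier)
      (A.univ.toList.map fun a => MC φ (A.addNul c (some a)))
  | .sall R φ, A =>
    Game.node (A.restrict A.nulValues, .sall R φ) (some .falsifier)
      (A.univ.powerset.toList.map fun U => MC φ (A.addRel R U))
  | .sex R φ, A =>
    Game.node (A.restrict A.nulValues, .sex R φ) (some .verifier)
      (A.univ.powerset.toList.map fun U => MC φ (A.addRel R U))

/-! ### The algorithms reduce, convert, forget, combine -/

/-- Remove subgames that are equivalent (`≅`) to an already kept one. -/
noncomputable def dedupEquiv : List (Game EPos) → List (Game EPos)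
  | [] => []
  | g :: gs =>
    let r := dedupEquiv gs
    if ∃ g' ∈ r, GEquivE g g' then r else g :: r

/-- The algorithm `reduce`. -/
noncomputable def reduce : Game EPos → Game EPos
  | .top => .top
  | .bot => .bot
  | .node p o subs =>
    if p.2.2.IsAtomic then Game.eval (Game.node p o subs)
    else
      let rs := subs.attach.map fun g => reduce g.1
      if p.2.2.IsUniversal ∧ Game.bot ∈ rs then Game.bot
      else if p.2.2.IsExistential ∧ Game.top ∈ rs then Game.top
      else
        let kept := dedupEquiv (rs.filter fun g => decide (g ≠ Game.top ∧ g ≠ Game.bot))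
        if kept = [] then Game.eval (Game.node p o ([] : List (Game EPos)))
        else Game.node p o kept
termination_by g => sizeOf g
decreasing_by
  exact Game.sizeOf_lt_node g.2

/-- Whether a game is a node whose position's structure is fully interpreted. -/
def Game.IsFullNodeE : Game EPos → Prop
  | .node q _ _ => q.1.FullyInterpreted
  | _ => False

/-- The algorithm `convert`, turning an extended model checking game into a
classical model checking game by keeping exactly the subgames whose position's
structure is fully interpreted. -/
noncomputable def convert : Game EPos → Game CPos
  | .top => .top
  | .bot => .bot
  | .node p o subs =>
    Game.node (p.1.restrict p.1.nulValues, p.2.2) o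
      (subs.attach.filterMap fun g =>
        if g.1.IsFullNodeE then some (convert g.1) else none)
termination_by g => sizeOf g
decreasing_by
  exact Game.sizeOf_lt_node g.2

/-- The algorithm `forget(𝒢, x)`. -/
noncomputable def forget : Game EPos → ℕ → Game EPos
  | .top, _ => .top
  | .bot, _ => .bot
  | .node p o subs, x =>
    let H := p.1
    let p' : EPos :=
      if ∃ c ∈ H.voc.nulls, H.nul c = some x then (H, p.2.1.erase x, p.2.2)
      else (H.restrict (H.univ.erase x), p.2.1.erase x, p.2.2)
    reduce (Game.node p' o (subs.attach.map fun g => forget g.1 x))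
termination_by g _ => sizeOf g
decreasing_by
  exact Game.sizeOf_lt_node g.2

/-- A pair of subgames that `combine` recurses on: both are nodes with the same
principal subformula and compatible structures. -/
def PairOk : Game EPos → Game EPos → Prop
  | .node p _ _, .node q _ _ => p.2.2 = q.2.2 ∧ Compatible p.1 q.1
  | _, _ => False

/-- The algorithm `combine(𝒢₁, 𝒢₂)`. -/
noncomputable def combine : Game EPos → Game EPos → Game EPos
  | .node p1 o1 s1, .node p2 _ s2 =>
    reduce (Game.node (p1.1.union p2.1, p1.2.1 ∪ p2.2.1, p1.2.2) o1
      ((s1.attach.flatMap fun g1 => s2.attach.map fun g2 => (g1, g2)).filterMap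
        fun gg => if PairOk gg.1.1 gg.2.1 then some (combine gg.1.1 gg.2.1) else none))
  | g, _ => g
termination_by g1 g2 => sizeOf g1 + sizeOf g2
decreasing_by
  have h1 := List.sizeOf_lt_of_mem gg.1.2
  have h2 := List.sizeOf_lt_of_mem gg.2.2
  simp only [Game.node.sizeOf_spec]
  omega

/-! ### Iterated exponentials and minima -/

/-- `iterexp t x = exp^t(x)`, the `t`-fold iterated exponential. -/
def iterexp : ℕ → ℕ → ℕ
  | 0, x => x
  | t + 1, x => 2 ^ iterexp t x

/-- `r` is the minimum of the set `V ⊆ ℤ`, in `WithTop ℤ` (with `min ∅ = ⊤`). -/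
def IsMinZ (r : WithTop ℤ) (V : Set ℤ) : Prop :=
  (∀ v ∈ V, r ≤ (v : WithTop ℤ)) ∧ (V = ∅ → r = ⊤) ∧
  (V.Nonempty → ∃ v ∈ V, r = (v : WithTop ℤ))

/-- `r` is the minimum of the set `V ⊆ WithTop ℤ` (with `min ∅ = ⊤`). -/
def IsMinW (r : WithTop ℤ) (V : Set (WithTop ℤ)) : Prop :=
  (∀ v ∈ V, r ≤ v) ∧ (V = ∅ → r = ⊤) ∧ (V.Nonempty → r ∈ V)

/-! ### Tree decompositions -/

/-- Rooted trees with bags at the nodes. -/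
inductive RTree where
  | node (bag : Finset ℕ) (children : List RTree)

theorem RTree.sizeOf_lt_node {b : Finset ℕ} {cs : List RTree} {c : RTree}
    (h : c ∈ cs) : sizeOf c < sizeOf (RTree.node b cs) := by
  have := List.sizeOf_lt_of_mem h
  simp only [RTree.node.sizeOf_spec]
  omega

def RTree.bag : RTree → Finset ℕ
  | .node b _ => b

/-- The subtree at an address (a node of the tree is identified with the list
of child indices leading to it from the root). -/
def RTree.subtreeAt : RTree → List ℕ → Option RTree
  | t, [] => some t
  | .node _ cs, i :: is =>
    match cs[i]? with
    | some c => c.subtreeAt is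
    | none => none

/-- The bag at an address. -/
def RTree.bagAt (t : RTree) (p : List ℕ) : Option (Finset ℕ) :=
  (t.subtreeAt p).map RTree.bag

/-- All objects occurring in bags of the tree (`Aᵢ` for the subtree at `i`). -/
def RTree.allObjs : RTree → Finset ℕ
  | .node b cs => b ∪ (cs.attach.map fun c => RTree.allObjs c.1).foldr (· ∪ ·) ∅
termination_by t => sizeOf t
decreasing_by
  exact RTree.sizeOf_lt_node c.2

/-- The number of nodes `|T|` of the tree. -/
def RTree.count : RTree → ℕ
  | .node _ cs => 1 + (cs.attach.map fun c => RTree.count c.1).sum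
termination_by t => sizeOf t
decreasing_by
  exact RTree.sizeOf_lt_node c.2

/-- Longest common prefix of two addresses. -/
def lcp : List ℕ → List ℕ → List ℕ
  | a :: as, b :: bs => if a = b then a :: lcp as bs else []
  | _, _ => []

/-- `(𝒯, 𝒳)` (coded as a single bag-labelled rooted tree) is a tree
decomposition of the relational structure `A`: bags are subsets of the universe
covering it, every tuple of every relation is contained in some bag, and if `r`
lies on the path between `p` and `q` then `X_p ∩ X_q ⊆ X_r`. -/
structure IsTreeDecomp (A : Struc) (t : RTree) : Prop where
  bags_sub : ∀ p b, t.bagAt p = some b → b ⊆ A.univ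
  covers : ∀ a ∈ A.univ, ∃ p b, t.bagAt p = some b ∧ a ∈ b
  rel_covers : ∀ R tup, A.rel R tup → ∃ p b, t.bagAt p = some b ∧ ∀ x ∈ tup, x ∈ b
  connected : ∀ p q r bp bq br, t.bagAt p = some bp → t.bagAt q = some bq →
    t.bagAt r = some br → lcp p q <+: r → (r <+: p ∨ r <+: q) → bp ∩ bq ⊆ br

/-- The width of the tree decomposition is at most `w`: every bag has at most
`w + 1` elements. -/
def TDWidthLE (t : RTree) (w : ℕ) : Prop :=
  ∀ p b, t.bagAt p = some b → b.card ≤ w + 1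

/-- A node of a nice tree decomposition is a leaf (singleton bag), an introduce
node, a forget node, or a join node. -/
def RTree.NiceStep : RTree → Prop
  | .node b [] => ∃ x, b = {x}
  | .node b [c] =>
      (∃ x, x ∉ c.allObjs ∧ b = insert x c.bag) ∨ (∃ x ∈ c.bag, b = c.bag.erase x)
  | .node b [c₁, c₂] => b = c₁.bag ∧ b = c₂.bag
  | .node _ _ => False

/-- A nice tree decomposition: every node is a leaf, introduce, forget, or join
node. -/
def RTree.Nice (t : RTree) : Prop := ∀ p s, t.subtreeAt p = some s → s.NiceStep

/-! ### The dynamic programming algorithm -/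

/-- `ValidAssign Rbar X U`: `U` is an assignment `(U₁, …, U_l)` of subsets of
`X` to the free unary relation symbols in `Rbar` (normalized to `∅` outside
`Rbar`). -/
def ValidAssign (Rbar X : Finset ℕ) (U : ℕ → Finset ℕ) : Prop :=
  (∀ R ∈ Rbar, U R ⊆ X) ∧ ∀ R ∉ Rbar, U R = ∅

/-- `W` matches `U` on the bag `Xi` (componentwise). -/
def Matches (Rbar Xi : Finset ℕ) (W U : ℕ → Finset ℕ) : Prop :=
  ∀ R ∈ Rbar, W R ∩ Xi = U R

/-- The reduced extended model checking game of the `τ`-expansion of `B`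
by the assignment `W`. -/
noncomputable def RED (φ : MSO) (Rbar : Finset ℕ) (B : Struc) (Xi : Finset ℕ)
    (W : ℕ → Finset ℕ) : Game EPos :=
  reduce (EMC φ (B.addRels Rbar W) Xi)

/-- The value `valᵢ(ℛ)` should be the minimum of `Σ αₖ |R_k^{𝔄ᵢ'} ∖ Xᵢ|` over
the matching expansions equivalent to `ℛ`; this is the summand for one `W`. -/
def cost (α : ℕ → ℤ) (Rbar : Finset ℕ) (X : Finset ℕ) (W : ℕ → Finset ℕ) : ℤ :=
  ∑ R ∈ Rbar, α R * (((W R) \ X).card : ℤ)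

/-- Invariant 12 at a node with substructure `Ai` and bag `Xi`, for the
table `S` and values `val`. -/
def Invariant (φ : MSO) (α : ℕ → ℤ) (Rbar : Finset ℕ) (Ai : Struc) (Xi : Finset ℕ)
    (S : (ℕ → Finset ℕ) → Set (Game EPos)) (val : Game EPos → WithTop ℤ) : Prop :=
  ∀ U, ValidAssign Rbar Xi U →
    ((∀ W, ValidAssign Rbar Ai.univ W → Matches Rbar Xi W U →
        RED φ Rbar Ai Xi W ≠ Game.bot →
        ∃! G, G ∈ S U ∧ GEquivE G (RED φ Rbar Ai Xi W)) ∧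
     (∀ G ∈ S U, G ≠ Game.bot ∧
        ∃ W, ValidAssign Rbar Ai.univ W ∧ Matches Rbar Xi W U ∧
          GEquivE (RED φ Rbar Ai Xi W) G) ∧
     (∀ G ∈ S U, IsMinZ (val G)
        {v : ℤ | ∃ W, ValidAssign Rbar Ai.univ W ∧ Matches Rbar Xi W U ∧
           GEquivE (RED φ Rbar Ai Xi W) G ∧ RED φ Rbar Ai Xi W ≠ Game.bot ∧
           v = cost α Rbar Xi W}))

end MSOG

namespace MSOG

attribute [local instance] Classical.propDecidable

set_option linter.dupNamespace false
attribute [local instance] Classical.propDecidable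

lemma attach_map_eval {P : Type} (s : List (Game P)) :
    (s.attach.map fun g => Game.eval g.1) = s.map Game.eval := by
  simp [List.attach_map_val]

lemma eval_node_fals {P : Type} (p : P) (s : List (Game P)) :
    Game.eval (Game.node p (some .falsifier) s) =
      (if ∀ g ∈ s.map Game.eval, g = Game.top then Game.top
       else if Game.bot ∈ s.map Game.eval then Game.bot
       else Game.node p (some .falsifier) (s.map Game.eval)) := by
  rw [Game.eval.eq_def]
  simp only [attach_map_eval]

lemma eval_node_ver {P : Type} (p : P) (s : List (Game P)) :
    Game.eval (Game.node p (some .verifier) s) =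
      (if ∀ g ∈ s.map Game.eval, g = Game.bot then Game.bot
       else if Game.top ∈ s.map Game.eval then Game.top
       else Game.node p (some .verifier) (s.map Game.eval)) := by
  rw [Game.eval.eq_def]
  simp only [attach_map_eval]

lemma eval_none_eq {P : Type} (p : P) (s : List (Game P)) :
    Game.eval (Game.node p none s) = Game.node p none (s.map Game.eval) := by
  rw [Game.eval.eq_def]
  simp only [attach_map_eval]

lemma eval_fals_top_iff {P : Type} (p : P) (s : List (Game P)) :
    Game.eval (Game.node p (some .falsifier) s) = Game.top ↔ ∀ g ∈ s, Game.eval g = Game.top := by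
  rw [eval_node_fals]
  constructor
  · intro h
    by_cases hc : ∀ g ∈ s.map Game.eval, g = Game.top
    · intro g hg; exact hc _ (List.mem_map_of_mem hg)
    · rw [if_neg hc] at h
      split_ifs at h <;> simp_all
  · intro h
    have hc : ∀ g ∈ s.map Game.eval, g = Game.top := by
      intro g hg; obtain ⟨a, ha, rfl⟩ := List.mem_map.1 hg; exact h a ha
    rw [if_pos hc]

lemma eval_fals_bot_iff {P : Type} (p : P) (s : List (Game P)) :
    Game.eval (Game.node p (some .falsifier) s) = Game.bot ↔ ∃ g ∈ s, Game.eval g = Game.bot := by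
  rw [eval_node_fals]
  constructor
  · intro h
    by_cases h1 : ∀ g ∈ s.map Game.eval, g = Game.top
    · rw [if_pos h1] at h; exact absurd h (by simp)
    · rw [if_neg h1] at h
      by_cases h2 : Game.bot ∈ s.map Game.eval
      · obtain ⟨a, ha, he⟩ := List.mem_map.1 h2; exact ⟨a, ha, he⟩
      · rw [if_neg h2] at h; exact absurd h (by simp)
  · rintro ⟨g, hg, he⟩
    have h2 : Game.bot ∈ s.map Game.eval := by rw [← he]; exact List.mem_map_of_mem hg
    have h1 : ¬ ∀ g ∈ s.map Game.eval, g = Game.top := by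
      intro hh; have := hh _ h2; simp_all
    rw [if_neg h1, if_pos h2]

lemma eval_ver_bot_iff {P : Type} (p : P) (s : List (Game P)) :
    Game.eval (Game.node p (some .verifier) s) = Game.bot ↔ ∀ g ∈ s, Game.eval g = Game.bot := by
  rw [eval_node_ver]
  constructor
  · intro h
    by_cases hc : ∀ g ∈ s.map Game.eval, g = Game.bot
    · intro g hg; exact hc _ (List.mem_map_of_mem hg)
    · rw [if_neg hc] at h
      split_ifs at h <;> simp_all
  · intro h
    have hc : ∀ g ∈ s.map Game.eval, g = Game.bot := by
      intro g hg; obtain ⟨a, ha, rfl⟩ := List.mem_map.1 hg; exact h a ha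
    rw [if_pos hc]

lemma eval_ver_top_iff {P : Type} (p : P) (s : List (Game P)) :
    Game.eval (Game.node p (some .verifier) s) = Game.top ↔ ∃ g ∈ s, Game.eval g = Game.top := by
  rw [eval_node_ver]
  constructor
  · intro h
    by_cases h1 : ∀ g ∈ s.map Game.eval, g = Game.bot
    · rw [if_pos h1] at h; exact absurd h (by simp)
    · rw [if_neg h1] at h
      by_cases h2 : Game.top ∈ s.map Game.eval
      · obtain ⟨a, ha, he⟩ := List.mem_map.1 h2; exact ⟨a, ha, he⟩
      · rw [if_neg h2] at h; exact absurd h (by simp)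
  · rintro ⟨g, hg, he⟩
    have h2 : Game.top ∈ s.map Game.eval := by rw [← he]; exact List.mem_map_of_mem hg
    have h1 : ¬ ∀ g ∈ s.map Game.eval, g = Game.bot := by
      intro hh; have := hh _ h2; simp_all
    rw [if_neg h1, if_pos h2]

lemma eval_nil_fals {P : Type} (p : P) :
    Game.eval (Game.node p (some .falsifier) []) = Game.top := by
  rw [eval_fals_top_iff]; simp

lemma eval_nil_ver {P : Type} (p : P) :
    Game.eval (Game.node p (some .verifier) []) = Game.bot := by
  rw [eval_ver_bot_iff]; simp


structure Ext (b : ℕ) (A B : Struc) : Prop where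
  hb : b ∉ A.univ
  hBu : B.univ = insert b A.univ
  nul_fwd : ∀ c x, A.nul c = some x → B.nul c = some x
  nul_mem : ∀ c x, A.nul c = some x → x ∈ A.univ
  rel_iff : ∀ R t, (∀ x ∈ t, x ∈ A.univ) → (A.rel R t ↔ B.rel R t)

lemma Ext.addNul_same {b : ℕ} {A B : Struc} (h : Ext b A B) (c : ℕ) {u : Option ℕ}
    (hu : ∀ x, u = some x → x ∈ A.univ) : Ext b (A.addNul c u) (B.addNul c u) := by
  refine ⟨h.hb, h.hBu, ?_, ?_, h.rel_iff⟩
  · intro d x hx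
    by_cases hd : d = c
    · simp only [Struc.addNul, hd, if_pos rfl] at hx ⊢; exact hx
    · simp only [Struc.addNul, if_neg hd] at hx ⊢; exact h.nul_fwd d x hx
  · intro d x hx
    by_cases hd : d = c
    · simp only [Struc.addNul, hd, if_pos rfl] at hx; exact hu x hx
    · simp only [Struc.addNul, if_neg hd] at hx; exact h.nul_mem d x hx

lemma Ext.addNul_b {b : ℕ} {A B : Struc} (h : Ext b A B) (c : ℕ) :
    Ext b (A.addNul c none) (B.addNul c (some b)) := by
  refine ⟨h.hb, h.hBu, ?_, ?_, h.rel_iff⟩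
  · intro d x hx
    by_cases hd : d = c
    · simp [Struc.addNul, hd] at hx
    · simp only [Struc.addNul, if_neg hd] at hx ⊢; exact h.nul_fwd d x hx
  · intro d x hx
    by_cases hd : d = c
    · simp [Struc.addNul, hd] at hx
    · simp only [Struc.addNul, if_neg hd] at hx; exact h.nul_mem d x hx

lemma Ext.addRel' {b : ℕ} {A B : Struc} (h : Ext b A B) (R : ℕ) (U : Finset ℕ) :
    Ext b (A.addRel R (U.erase b)) (B.addRel R U) := by
  refine ⟨h.hb, h.hBu, h.nul_fwd, h.nul_mem, ?_⟩
  intro S t ht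
  by_cases hS : S = R
  · simp only [Struc.addRel, hS, if_pos rfl]
    constructor
    · rintro ⟨x, hx, rfl⟩; exact ⟨x, Finset.mem_of_mem_erase hx, rfl⟩
    · rintro ⟨x, hx, rfl⟩
      have hxA : x ∈ A.univ := ht x (by simp)
      have hxb : x ≠ b := fun hxb => h.hb (hxb ▸ hxA)
      exact ⟨x, Finset.mem_erase.2 ⟨hxb, hx⟩, rfl⟩
  · simp only [Struc.addRel, if_neg hS]
    exact h.rel_iff S t ht

lemma mapM_ext {b : ℕ} {A B : Struc} (h : Ext b A B) :
    ∀ (cs : List ℕ), (∀ c ∈ cs, (A.nul c).isSome) →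
      ∃ t, cs.mapM A.nul = some t ∧ cs.mapM B.nul = some t ∧ ∀ x ∈ t, x ∈ A.univ := by
  intro cs
  induction cs with
  | nil => intro _; exact ⟨[], by rw [List.mapM_nil]; rfl, by rw [List.mapM_nil]; rfl, by simp⟩
  | cons c cs ih =>
    intro hall
    obtain ⟨x, hx⟩ := Option.isSome_iff_exists.1 (hall c (by simp))
    obtain ⟨t, h1, h2, h3⟩ := ih (fun d hd => hall d (by simp [hd]))
    refine ⟨x :: t, ?_, ?_, ?_⟩
    · rw [List.mapM_cons, hx, h1]; rfl
    · rw [List.mapM_cons, h.nul_fwd c x hx, h2]; rfl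
    · intro y hy
      rcases List.mem_cons.1 hy with rfl | hy
      · exact h.nul_mem c y hx
      · exact h3 y hy

lemma sat_atom_iff {b : ℕ} {A B : Struc} (h : Ext b A B) (R : ℕ) (cs : List ℕ)
    (hall : ∀ c ∈ cs, (A.nul c).isSome) :
    (∀ c ∈ cs, (B.nul c).isSome) ∧
    (Sat A (.atom R cs) ↔ Sat B (.atom R cs)) ∧
    (Sat A (.natom R cs) ↔ Sat B (.natom R cs)) := by
  obtain ⟨t, h1, h2, h3⟩ := mapM_ext h cs hall
  refine ⟨?_, ?_, ?_⟩
  · intro c hc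
    obtain ⟨x, hx⟩ := Option.isSome_iff_exists.1 (hall c hc)
    simp [h.nul_fwd c x hx]
  · simp only [Sat, h1, h2, Option.some.injEq]
    constructor
    · rintro ⟨t', rfl, hr⟩; exact ⟨t, rfl, (h.rel_iff R t h3).1 hr⟩
    · rintro ⟨t', rfl, hr⟩; exact ⟨t, rfl, (h.rel_iff R t h3).2 hr⟩
  · simp only [Sat, h1, h2, Option.some.injEq]
    constructor
    · rintro ⟨t', rfl, hr⟩; exact ⟨t, rfl, fun hr' => hr ((h.rel_iff R t h3).2 hr')⟩
    · rintro ⟨t', rfl, hr⟩; exact ⟨t, rfl, fun hr' => hr ((h.rel_iff R t h3).1 hr')⟩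

theorem transfer (b : ℕ) (φ : MSO) : ∀ (A B : Struc) (X Y : Finset ℕ), Ext b A B →
    (Game.eval (EMC φ A X) = Game.top → Game.eval (EMC φ B Y) = Game.top) ∧
    (Game.eval (EMC φ A X) = Game.bot → Game.eval (EMC φ B Y) = Game.bot) := by
  induction φ with
  | atom R cs =>
    intro A B X Y h
    simp only [EMC]
    by_cases hall : ∀ c ∈ cs, (A.nul c).isSome
    · obtain ⟨hallB, hiff, _⟩ := sat_atom_iff h R cs hall
      by_cases hs : Sat A (.atom R cs)
      · rw [if_pos hall, if_pos hs, if_pos hallB, if_pos (hiff.1 hs)]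
        exact ⟨fun _ => eval_nil_fals _, fun hb' => by rw [eval_nil_fals] at hb'; simp at hb'⟩
      · rw [if_pos hall, if_neg hs, if_pos hallB, if_neg (fun hs' => hs (hiff.2 hs'))]
        exact ⟨fun ht' => by rw [eval_nil_ver] at ht'; simp at ht', fun _ => eval_nil_ver _⟩
    · rw [if_neg hall]
      constructor
      · intro ht'; rw [eval_none_eq] at ht'; simp at ht'
      · intro hb'; rw [eval_none_eq] at hb'; simp at hb'
  | natom R cs =>
    intro A B X Y h
    simp only [EMC]
    by_cases hall : ∀ c ∈ cs, (A.nul c).isSome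
    · obtain ⟨hallB, _, hiff⟩ := sat_atom_iff h R cs hall
      by_cases hs : Sat A (.natom R cs)
      · rw [if_pos hall, if_pos hs, if_pos hallB, if_pos (hiff.1 hs)]
        exact ⟨fun _ => eval_nil_fals _, fun hb' => by rw [eval_nil_fals] at hb'; simp at hb'⟩
      · rw [if_pos hall, if_neg hs, if_pos hallB, if_neg (fun hs' => hs (hiff.2 hs'))]
        exact ⟨fun ht' => by rw [eval_nil_ver] at ht'; simp at ht', fun _ => eval_nil_ver _⟩
    · rw [if_neg hall]
      constructor
      · intro ht'; rw [eval_none_eq] at ht'; simp at ht'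
      · intro hb'; rw [eval_none_eq] at hb'; simp at hb'
  | conj φ ψ ih1 ih2 =>
    intro A B X Y h
    simp only [EMC]
    constructor
    · intro ht
      rw [eval_fals_top_iff] at ht ⊢
      intro g hg
      simp only [List.mem_cons, List.not_mem_nil, or_false] at hg
      rcases hg with rfl | rfl
      · exact (ih1 A B X Y h).1 (ht _ (by simp))
      · exact (ih2 A B X Y h).1 (ht _ (by simp))
    · intro hb'
      rw [eval_fals_bot_iff] at hb' ⊢
      obtain ⟨g, hg, he⟩ := hb'
      simp only [List.mem_cons, List.not_mem_nil, or_false] at hg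
      rcases hg with rfl | rfl
      · exact ⟨_, by simp, (ih1 A B X Y h).2 he⟩
      · exact ⟨_, by simp, (ih2 A B X Y h).2 he⟩
  | disj φ ψ ih1 ih2 =>
    intro A B X Y h
    simp only [EMC]
    constructor
    · intro ht
      rw [eval_ver_top_iff] at ht ⊢
      obtain ⟨g, hg, he⟩ := ht
      simp only [List.mem_cons, List.not_mem_nil, or_false] at hg
      rcases hg with rfl | rfl
      · exact ⟨_, by simp, (ih1 A B X Y h).1 he⟩
      · exact ⟨_, by simp, (ih2 A B X Y h).1 he⟩
    · intro hb'
      rw [eval_ver_bot_iff] at hb' ⊢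
      intro g hg
      simp only [List.mem_cons, List.not_mem_nil, or_false] at hg
      rcases hg with rfl | rfl
      · exact (ih1 A B X Y h).2 (hb' _ (by simp))
      · exact (ih2 A B X Y h).2 (hb' _ (by simp))
  | fall c φ ih =>
    intro A B X Y h
    simp only [EMC]
    have memA : ∀ u ∈ (none :: A.univ.toList.map some),
        EMC φ (A.addNul c u) X ∈ ((none :: A.univ.toList.map some).map
          fun u => EMC φ (A.addNul c u) X) := fun u hu => List.mem_map_of_mem hu
    constructor
    · intro ht
      rw [eval_fals_top_iff] at ht ⊢
      intro g hg
      obtain ⟨u, hu, rfl⟩ := List.mem_map.1 hg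
      rcases List.mem_cons.1 hu with rfl | hu
      · exact (ih _ _ X Y (h.addNul_same c (by simp))).1
          (ht _ (memA none (by simp)))
      · obtain ⟨a, ha, rfl⟩ := List.mem_map.1 hu
        have haB : a ∈ B.univ := Finset.mem_toList.1 ha
        rw [h.hBu] at haB
        rcases Finset.mem_insert.1 haB with rfl | haA
        · exact (ih _ _ X Y (h.addNul_b c)).1 (ht _ (memA none (by simp)))
        · exact (ih _ _ X Y (h.addNul_same c (fun x hx => by
            cases hx; exact haA))).1
            (ht _ (memA (some a) (by simp [Finset.mem_toList, haA])))
    · intro hb'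
      rw [eval_fals_bot_iff] at hb' ⊢
      obtain ⟨g, hg, he⟩ := hb'
      obtain ⟨u, hu, rfl⟩ := List.mem_map.1 hg
      rcases List.mem_cons.1 hu with rfl | hu
      · exact ⟨EMC φ (B.addNul c none) Y, List.mem_map_of_mem (by simp),
          (ih _ _ X Y (h.addNul_same c (by simp))).2 he⟩
      · obtain ⟨a, ha, rfl⟩ := List.mem_map.1 hu
        have haA : a ∈ A.univ := Finset.mem_toList.1 ha
        have haB : a ∈ B.univ := by rw [h.hBu]; exact Finset.mem_insert_of_mem haA
        exact ⟨EMC φ (B.addNul c (some a)) Y,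
          List.mem_map_of_mem (by simp [Finset.mem_toList, haB]),
          (ih _ _ X Y (h.addNul_same c (fun x hx => by cases hx; exact haA))).2 he⟩
  | fex c φ ih =>
    intro A B X Y h
    simp only [EMC]
    have memA : ∀ u ∈ (none :: A.univ.toList.map some),
        EMC φ (A.addNul c u) X ∈ ((none :: A.univ.toList.map some).map
          fun u => EMC φ (A.addNul c u) X) := fun u hu => List.mem_map_of_mem hu
    constructor
    · intro ht
      rw [eval_ver_top_iff] at ht ⊢
      obtain ⟨g, hg, he⟩ := ht
      obtain ⟨u, hu, rfl⟩ := List.mem_map.1 hg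
      rcases List.mem_cons.1 hu with rfl | hu
      · exact ⟨EMC φ (B.addNul c none) Y, List.mem_map_of_mem (by simp),
          (ih _ _ X Y (h.addNul_same c (by simp))).1 he⟩
      · obtain ⟨a, ha, rfl⟩ := List.mem_map.1 hu
        have haA : a ∈ A.univ := Finset.mem_toList.1 ha
        have haB : a ∈ B.univ := by rw [h.hBu]; exact Finset.mem_insert_of_mem haA
        exact ⟨EMC φ (B.addNul c (some a)) Y,
          List.mem_map_of_mem (by simp [Finset.mem_toList, haB]),
          (ih _ _ X Y (h.addNul_same c (fun x hx => by cases hx; exact haA))).1 he⟩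
    · intro hb'
      rw [eval_ver_bot_iff] at hb' ⊢
      intro g hg
      obtain ⟨u, hu, rfl⟩ := List.mem_map.1 hg
      rcases List.mem_cons.1 hu with rfl | hu
      · exact (ih _ _ X Y (h.addNul_same c (by simp))).2
          (hb' _ (memA none (by simp)))
      · obtain ⟨a, ha, rfl⟩ := List.mem_map.1 hu
        have haB : a ∈ B.univ := Finset.mem_toList.1 ha
        rw [h.hBu] at haB
        rcases Finset.mem_insert.1 haB with rfl | haA
        · exact (ih _ _ X Y (h.addNul_b c)).2 (hb' _ (memA none (by simp)))
        · exact (ih _ _ X Y (h.addNul_same c (fun x hx => by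
            cases hx; exact haA))).2
            (hb' _ (memA (some a) (by simp [Finset.mem_toList, haA])))
  | sall R φ ih =>
    intro A B X Y h
    simp only [EMC]
    constructor
    · intro ht
      rw [eval_fals_top_iff] at ht ⊢
      intro g hg
      obtain ⟨U, hU, rfl⟩ := List.mem_map.1 hg
      have hUB : U ⊆ B.univ := Finset.mem_powerset.1 (Finset.mem_toList.1 hU)
      have hUA : U.erase b ⊆ A.univ := by
        intro x hx
        have hxB := hUB (Finset.mem_of_mem_erase hx)
        rw [h.hBu] at hxB
        exact (Finset.mem_insert.1 hxB).resolve_left (Finset.ne_of_mem_erase hx)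
      exact (ih _ _ X Y (h.addRel' R U)).1
        (ht _ (List.mem_map_of_mem (by simp [Finset.mem_toList, Finset.mem_powerset, hUA])))
    · intro hb'
      rw [eval_fals_bot_iff] at hb' ⊢
      obtain ⟨g, hg, he⟩ := hb'
      obtain ⟨U, hU, rfl⟩ := List.mem_map.1 hg
      have hUA : U ⊆ A.univ := Finset.mem_powerset.1 (Finset.mem_toList.1 hU)
      have hUB : U ⊆ B.univ := by rw [h.hBu]; exact hUA.trans (Finset.subset_insert _ _)
      have herase : U.erase b = U := Finset.erase_eq_of_notMem (fun hbU => h.hb (hUA hbU))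
      refine ⟨EMC φ (B.addRel R U) Y,
        List.mem_map_of_mem (by simp [Finset.mem_toList, Finset.mem_powerset, hUB]), ?_⟩
      have := (ih _ _ X Y (h.addRel' R U)).2
      rw [herase] at this
      exact this he
    | sex R φ ih =>
    intro A B X Y h
    simp only [EMC]
    constructor
    · intro ht
      rw [eval_ver_top_iff] at ht ⊢
      obtain ⟨g, hg, he⟩ := ht
      obtain ⟨U, hU, rfl⟩ := List.mem_map.1 hg
      have hUA : U ⊆ A.univ := Finset.mem_powerset.1 (Finset.mem_toList.1 hU)
      have hUB : U ⊆ B.univ := by rw [h.hBu]; exact hUA.trans (Finset.subset_insert _ _)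
      have herase : U.erase b = U := Finset.erase_eq_of_notMem (fun hbU => h.hb (hUA hbU))
      refine ⟨EMC φ (B.addRel R U) Y,
        List.mem_map_of_mem (by simp [Finset.mem_toList, Finset.mem_powerset, hUB]), ?_⟩
      have := (ih _ _ X Y (h.addRel' R U)).1
      rw [herase] at this
      exact this he
    · intro hb'
      rw [eval_ver_bot_iff] at hb' ⊢
      intro g hg
      obtain ⟨U, hU, rfl⟩ := List.mem_map.1 hg
      have hUB : U ⊆ B.univ := Finset.mem_powerset.1 (Finset.mem_toList.1 hU)
      have hUA : U.erase b ⊆ A.univ := by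
        intro x hx
        have hxB := hUB (Finset.mem_of_mem_erase hx)
        rw [h.hBu] at hxB
        exact (Finset.mem_insert.1 hxB).resolve_left (Finset.ne_of_mem_erase hx)
      exact (ih _ _ X Y (h.addRel' R U)).2
        (hb' _ (List.mem_map_of_mem (by simp [Finset.mem_toList, Finset.mem_powerset, hUA])))


/-- Introduce: compatible `𝔄`, `𝔅` with `B = A ⊎ {b}`; winning
strategies on `EMC(𝔄, X, φ)` carry over to `EMC(𝔅, X ∪ {b}, φ)`. -/
theorem statement_3 (ar : ℕ → ℕ) (τ : Vocab) (A B : Struc) (b : ℕ)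
    (X : Finset ℕ) (φ : MSO)
    (harity : ∀ R ∈ τ.rels, 1 ≤ ar R)
    (hA : A.WF ar) (hB : B.WF ar) (hvA : A.voc = τ) (hvB : B.voc = τ)
    (hcomp : Compatible A B) (hb : b ∉ A.univ) (hBu : B.univ = insert b A.univ)
    (hX : X ⊆ A.univ) (hφ : MSO.wf ar τ φ) :
    (Game.eval (EMC φ A X) = Game.top → Game.eval (EMC φ B (insert b X)) = Game.top) ∧
    (Game.eval (EMC φ A X) = Game.bot → Game.eval (EMC φ B (insert b X)) = Game.bot) := by
  obtain ⟨hvoc, hagree, hiso⟩ := hcomp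
  have hAB : A.univ ⊆ B.univ := by rw [hBu]; exact Finset.subset_insert _ _
  have hfwd : ∀ c x, A.nul c = some x → B.nul c = some x := by
    intro c x hx
    have hc := hA.nul_wf c x hx
    have hxs : x ∈ A.univ ∩ B.univ := Finset.mem_inter.2 ⟨hc.2, hAB hc.2⟩
    have h1 : (A.restrict (A.univ ∩ B.univ)).nul c = some x := by
      simp [Struc.restrict, hx, hc.2, hAB hc.2]
    have h2 := hiso.nul_map c hc.1 x h1
    simp only [Struc.restrict, id_eq] at h2
    cases hB2 : B.nul c with
    | none => rw [hB2] at h2; simp at h2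
    | some y =>
      rw [hB2] at h2
      by_cases hy : y ∈ A.univ ∩ B.univ
      · simp [hy] at h2; simp [h2]
      · simp [hy] at h2
  have hrel : ∀ R t, (∀ x ∈ t, x ∈ A.univ) → (A.rel R t ↔ B.rel R t) := by
    intro R t ht
    by_cases hR : R ∈ A.voc.rels
    · have hts : ∀ x ∈ t, x ∈ (A.restrict (A.univ ∩ B.univ)).univ := by
        intro x hx
        simp only [Struc.restrict, Finset.mem_inter]
        exact ⟨ht x hx, ht x hx, hAB (ht x hx)⟩
      have key := hiso.rel_map R hR t hts
      simp only [Struc.restrict, List.map_id] at key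
      have hmem : ∀ x ∈ t, x ∈ A.univ ∩ B.univ :=
        fun x hx => Finset.mem_inter.2 ⟨ht x hx, hAB (ht x hx)⟩
      constructor
      · intro hr; exact (key.1 ⟨hr, hmem⟩).1
      · intro hr; exact (key.2 ⟨hr, hmem⟩).1
    · constructor
      · intro hr; exact absurd (hA.rel_wf R t hr).1 hR
      · intro hr
        have h2 := (hB.rel_wf R t hr).1
        rw [hvB, ← hvA] at h2
        exact absurd h2 hR
  exact transfer b φ A B X (insert b X)
    ⟨hb, hBu, hfwd, fun c x hx => (hA.nul_wf c x hx).2, hrel⟩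


end MSOG
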